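/- For every even integer n ≥ 6, there exist permutations σ₁, σ₂, σ₃, σ₄ in the symmetric group Sₙ on n letters such that: σ₁ has cycle type consisting of one 3 together with (n-4)/2 copies of 2 (a 3-cycle times (n-4)/2 disjoint transpositions), σ₂ and σ₃ each have cycle type consisting of (n-2)/2 copies of 2, σ₄ has cycle type consisting of n/2 copies of 2 (a fixed-point-free involution), σ₁σ₂σ₃σ₄ = 1, and the subgroup of Sₙ generated by σ₁, σ₂, σ₃, σ₄ is transitive on the n letters. -/

import Mathlib

open Equiv Equiv.Perm Function Finset

namespace Stmt14Aux

/-- `i ↦ -i` mod `n`. -/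
def g2 (n : ℕ) : ℕ → ℕ := fun i => if i = 0 then 0 else n - i

/-- `i ↦ -1-i` mod `n`, except fixing `0` and `n-1`. -/
def g3 (n : ℕ) : ℕ → ℕ := fun i => if i = 0 then 0 else if i = n - 1 then n - 1 else n - 1 - i

/-- `i ↦ 1-i` mod `n`. -/
def g4 (n : ℕ) : ℕ → ℕ := fun i => if i = 0 then 1 else if i = 1 then 0 else n + 1 - i

/-- `i ↦ 2-i` mod `n`, except fixing `0`, `1`, `2`. -/
def gE (n : ℕ) : ℕ → ℕ := fun i => if i ≤ 2 then i else n + 2 - i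

/-- the three-cycle `(0 1 2)`. -/
def gC : ℕ → ℕ := fun i => if i = 0 then 1 else if i = 1 then 2 else if i = 2 then 0 else i

/-- the three-cycle `(0 2 1)`. -/
def gD : ℕ → ℕ := fun i => if i = 0 then 2 else if i = 1 then 0 else if i = 2 then 1 else i

variable {n : ℕ}

theorem hg2 (hn : 6 ≤ n) {i : ℕ} (hi : i < n) : g2 n i < n := by
  unfold g2; split_ifs <;> first | contradiction | omega
theorem hg3 (hn : 6 ≤ n) {i : ℕ} (hi : i < n) : g3 n i < n := by
  unfold g3; split_ifs <;> first | contradiction | omega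
theorem hg4 (hn : 6 ≤ n) {i : ℕ} (hi : i < n) : g4 n i < n := by
  unfold g4; split_ifs <;> first | contradiction | omega
theorem hgE (hn : 6 ≤ n) {i : ℕ} (hi : i < n) : gE n i < n := by
  unfold gE; split_ifs <;> first | contradiction | omega
theorem hgC (hn : 6 ≤ n) {i : ℕ} (hi : i < n) : gC i < n := by
  unfold gC; split_ifs <;> first | contradiction | omega
theorem hgD (hn : 6 ≤ n) {i : ℕ} (hi : i < n) : gD i < n := by
  unfold gD; split_ifs <;> first | contradiction | omega

variable (hn : 6 ≤ n)

def f2 : Fin n → Fin n := fun i => ⟨g2 n i.1, hg2 hn i.2⟩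
def f3 : Fin n → Fin n := fun i => ⟨g3 n i.1, hg3 hn i.2⟩
def f4 : Fin n → Fin n := fun i => ⟨g4 n i.1, hg4 hn i.2⟩
def fE : Fin n → Fin n := fun i => ⟨gE n i.1, hgE hn i.2⟩

theorem hf2 : Involutive (f2 hn) := by
  intro i; apply Fin.ext
  have := i.2
  simp only [f2, g2, Fin.val_mk]
  split_ifs <;> first | contradiction | omega

theorem hf3 : Involutive (f3 hn) := by
  intro i; apply Fin.ext
  have := i.2
  simp only [f3, g3, Fin.val_mk]
  split_ifs <;> first | contradiction | omega

theorem hf4 : Involutive (f4 hn) := by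
  intro i; apply Fin.ext
  have := i.2
  simp only [f4, g4, Fin.val_mk]
  split_ifs <;> first | contradiction | omega

theorem hfE : Involutive (fE hn) := by
  intro i; apply Fin.ext
  have := i.2
  simp only [fE, gE, Fin.val_mk]
  split_ifs <;> first | contradiction | omega

def p2 : Perm (Fin n) := (hf2 hn).toPerm _
def p3 : Perm (Fin n) := (hf3 hn).toPerm _
def p4 : Perm (Fin n) := (hf4 hn).toPerm _
def pE : Perm (Fin n) := (hfE hn).toPerm _

/-- The three-cycle `(0 1 2)` as a permutation of `Fin n`. -/
def pC : Perm (Fin n) where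
  toFun i := ⟨gC i.1, hgC hn i.2⟩
  invFun i := ⟨gD i.1, hgD hn i.2⟩
  left_inv i := by
    apply Fin.ext
    have := i.2
    simp only [gC, gD, Fin.val_mk]
    split_ifs <;> first | contradiction | omega
  right_inv i := by
    apply Fin.ext
    have := i.2
    simp only [gC, gD, Fin.val_mk]
    split_ifs <;> first | contradiction | omega

def p1 : Perm (Fin n) := pC hn * pE hn

theorem p2_apply (x : Fin n) : ((p2 hn) x).1 = g2 n x.1 := rfl
theorem p3_apply (x : Fin n) : ((p3 hn) x).1 = g3 n x.1 := rfl
theorem p4_apply (x : Fin n) : ((p4 hn) x).1 = g4 n x.1 := rfl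
theorem pE_apply (x : Fin n) : ((pE hn) x).1 = gE n x.1 := rfl
theorem pC_apply (x : Fin n) : ((pC hn) x).1 = gC x.1 := by
  simp only [pC, Equiv.coe_fn_mk]

theorem support_eq {σ : Perm (Fin n)} {s : Finset (Fin n)}
    (h : ∀ x : Fin n, σ x = x ↔ x ∉ s) : σ.support = s := by
  ext x
  rw [Equiv.Perm.mem_support]
  exact (not_iff_not.mpr (h x)).trans not_not

/-- Cycle type of an involution with support of size `2k`, `k > 0`. -/
theorem invol_cycleType {σ : Perm (Fin n)} (h2 : σ * σ = 1)
    {k : ℕ} (hk : 0 < k) (hcard : σ.support.card = 2 * k) :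
    σ.cycleType = Multiset.replicate k 2 := by
  have hne : σ ≠ 1 := by
    intro h
    rw [← Equiv.Perm.support_eq_empty_iff, ← Finset.card_eq_zero] at h
    omega
  have ho : orderOf σ = 2 := orderOf_eq_prime (by rw [pow_two]; exact h2) hne
  have hp : (orderOf σ).Prime := by rw [ho]; exact Nat.prime_two
  obtain ⟨j, hj⟩ := Equiv.Perm.cycleType_prime_order hp
  rw [ho] at hj
  have hsum := σ.sum_cycleType
  rw [hj, Multiset.sum_replicate, hcard, smul_eq_mul] at hsum
  have : j + 1 = k := by omega
  rw [hj, this]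

theorem card_support_of_compl {σ : Perm (Fin n)} {s : Finset (Fin n)}
    (h : ∀ x : Fin n, σ x = x ↔ x ∈ s) : σ.support.card = n - s.card := by
  have hs : σ.support = sᶜ := by
    ext x
    simp only [Equiv.Perm.mem_support, Finset.mem_compl, ← h x]
  rw [hs, Finset.card_compl, Fintype.card_fin]

theorem mulself (f : Fin n → Fin n) (hf : Involutive f) : hf.toPerm f * hf.toPerm f = 1 := by
  ext x
  simp only [Equiv.Perm.mul_apply, Involutive.coe_toPerm, Equiv.Perm.one_apply]
  exact congrArg Fin.val (hf x)

end Stmt14Aux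

open Stmt14Aux

/-- Type I degeneration 4 for even `n ≥ 6`:
cycle types `((3)(2)^((n-4)/2), 2^((n-2)/2), 2^((n-2)/2), 2^(n/2))`,
product one, generating a transitive subgroup of `Sₙ`. -/
theorem stmt_14 (n : ℕ) (hn : Even n) (hn6 : 6 ≤ n) :
    ∃ σ₁ σ₂ σ₃ σ₄ : Equiv.Perm (Fin n),
      σ₁.cycleType = 3 ::ₘ Multiset.replicate ((n - 4) / 2) 2 ∧
      σ₂.cycleType = Multiset.replicate ((n - 2) / 2) 2 ∧
      σ₃.cycleType = Multiset.replicate ((n - 2) / 2) 2 ∧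
      σ₄.cycleType = Multiset.replicate (n / 2) 2 ∧
      σ₁ * σ₂ * σ₃ * σ₄ = 1 ∧
      ∀ a b : Fin n,
        ∃ g ∈ Subgroup.closure ({σ₁, σ₂, σ₃, σ₄} : Set (Equiv.Perm (Fin n))), g a = b := by
  have hn2 : n % 2 = 0 := Nat.even_iff.mp hn
  refine ⟨p1 hn6, p2 hn6, p3 hn6, p4 hn6, ?_, ?_, ?_, ?_, ?_, ?_⟩
  -- cycle type of σ₁
  · have hdisj : (pC hn6).Disjoint (pE hn6) := by
      intro x
      by_cases hx : x.1 ≤ 2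
      · right
        apply Fin.ext
        rw [pE_apply]
        simp only [gE, if_pos hx]
      · left
        apply Fin.ext
        rw [pC_apply]
        simp only [gC]
        rw [if_neg (by omega), if_neg (by omega), if_neg (by omega)]
    have hc3 : (pC hn6).IsThreeCycle := by
      rw [← card_support_eq_three_iff]
      rw [support_eq (s := {⟨0, by omega⟩, ⟨1, by omega⟩, ⟨2, by omega⟩})]
      · rw [Finset.card_insert_of_notMem, Finset.card_insert_of_notMem,
          Finset.card_singleton] <;>
          simp only [Finset.mem_insert, Finset.mem_singleton, Fin.ext_iff, Fin.val_mk,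
            not_or] <;> omega
      · intro x
        have := x.2
        rw [Fin.ext_iff, pC_apply]
        simp only [gC, Finset.mem_insert, Finset.mem_singleton, Fin.ext_iff, Fin.val_mk,
          not_or]
        split_ifs <;> first | contradiction | (constructor <;> intro h <;> omega)
    have hpET : (pE hn6).cycleType = Multiset.replicate ((n - 4) / 2) 2 := by
      apply invol_cycleType (σ := pE hn6) (mulself _ _) (by omega)
      rw [card_support_of_compl (s := {⟨0, by omega⟩, ⟨1, by omega⟩, ⟨2, by omega⟩,
        ⟨n / 2 + 1, by omega⟩})]
      · rw [show ({⟨0, by omega⟩, ⟨1, by omega⟩, ⟨2, by omega⟩, ⟨n / 2 + 1, by omega⟩} :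
          Finset (Fin n)).card = 4 from by
          rw [Finset.card_insert_of_notMem, Finset.card_insert_of_notMem,
            Finset.card_insert_of_notMem, Finset.card_singleton] <;>
            simp only [Finset.mem_insert, Finset.mem_singleton, Fin.ext_iff, Fin.val_mk,
              not_or] <;> omega]
        omega
      · intro x
        have := x.2
        rw [Fin.ext_iff, pE_apply]
        simp only [gE, Finset.mem_insert, Finset.mem_singleton, Fin.ext_iff, Fin.val_mk]
        split_ifs <;> first | contradiction | (constructor <;> intro h <;> omega)
    rw [p1, Equiv.Perm.Disjoint.cycleType_mul hdisj, hc3.cycleType, hpET,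
      ← Multiset.singleton_add]
  -- cycle type of σ₂
  · apply invol_cycleType (σ := p2 hn6) (mulself _ _) (by omega)
    rw [card_support_of_compl (s := {⟨0, by omega⟩, ⟨n / 2, by omega⟩})]
    · rw [Finset.card_pair (Fin.ne_of_val_ne (by simp only [Fin.val_mk]; omega))]
      omega
    · intro x
      have := x.2
      rw [Fin.ext_iff, p2_apply]
      simp only [g2, Finset.mem_insert, Finset.mem_singleton, Fin.ext_iff, Fin.val_mk]
      split_ifs <;> first | contradiction | (constructor <;> intro h <;> omega)
  -- cycle type of σ₃
  · apply invol_cycleType (σ := p3 hn6) (mulself _ _) (by omega)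
    rw [card_support_of_compl (s := {⟨0, by omega⟩, ⟨n - 1, by omega⟩})]
    · rw [Finset.card_pair (Fin.ne_of_val_ne (by simp only [Fin.val_mk]; omega))]
      omega
    · intro x
      have := x.2
      rw [Fin.ext_iff, p3_apply]
      simp only [g3, Finset.mem_insert, Finset.mem_singleton, Fin.ext_iff, Fin.val_mk]
      split_ifs <;> first | contradiction | (constructor <;> intro h <;> omega)
  -- cycle type of σ₄
  · apply invol_cycleType (σ := p4 hn6) (mulself _ _) (by omega)
    rw [card_support_of_compl (s := (∅ : Finset (Fin n)))]
    · rw [Finset.card_empty]; omega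
    · intro x
      have := x.2
      rw [Fin.ext_iff, p4_apply]
      simp only [g4, Finset.notMem_empty, iff_false]
      split_ifs <;> first | contradiction | omega
  -- product is one
  · ext x
    have hx := x.2
    rw [Equiv.Perm.mul_apply, Equiv.Perm.mul_apply, Equiv.Perm.mul_apply,
      Equiv.Perm.one_apply, p1, Equiv.Perm.mul_apply]
    rw [pC_apply,
      show ((pE hn6) ((p2 hn6) ((p3 hn6) ((p4 hn6) x)))).1
        = gE n (g2 n (g3 n (g4 n x.1))) from rfl]
    simp only [g4]
    split_ifs <;> (try simp only [g3]) <;> (try split_ifs) <;>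
      (try simp only [g2]) <;> (try split_ifs) <;>
      (try simp only [gE]) <;> (try split_ifs) <;>
      (try simp only [gC]) <;> (try split_ifs) <;>
      first | contradiction | omega
  -- transitivity
  · have hρ : ∀ k (hk : k < n), ((p4 hn6 * p2 hn6) ^ k) ⟨0, by omega⟩ = ⟨k, hk⟩ := by
      intro k
      induction k with
      | zero => intro hk; simp
      | succ m ih =>
        intro hk
        rw [pow_succ', Equiv.Perm.mul_apply, ih (by omega)]
        apply Fin.ext
        rw [Equiv.Perm.mul_apply,
          show ((p4 hn6) ((p2 hn6) ⟨m, by omega⟩)).1 = g4 n (g2 n m) from rfl]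
        simp only [g2, g4, Fin.val_mk]
        split_ifs <;> first | contradiction | omega
    intro a b
    refine ⟨(p4 hn6 * p2 hn6) ^ b.1 * ((p4 hn6 * p2 hn6) ^ a.1)⁻¹, ?_, ?_⟩
    · have h4 : p4 hn6 ∈ Subgroup.closure
          ({p1 hn6, p2 hn6, p3 hn6, p4 hn6} : Set (Equiv.Perm (Fin n))) :=
        Subgroup.subset_closure (by simp)
      have h2 : p2 hn6 ∈ Subgroup.closure
          ({p1 hn6, p2 hn6, p3 hn6, p4 hn6} : Set (Equiv.Perm (Fin n))) :=
        Subgroup.subset_closure (by simp)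
      exact mul_mem (pow_mem (mul_mem h4 h2) _) (inv_mem (pow_mem (mul_mem h4 h2) _))
    · rw [Equiv.Perm.mul_apply]
      have ha : ((p4 hn6 * p2 hn6) ^ a.1)⁻¹ a = ⟨0, by omega⟩ := by
        rw [Equiv.Perm.inv_eq_iff_eq, hρ a.1 a.2]
      rw [ha, hρ b.1 b.2]
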